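/- arXiv:2103.08495 — 3 statements merged into one kernel-verified Lean document; each statement's English description precedes it below -/
import Mathlib

section
/- Let T > 0, p ∈ [2, ∞), and γ > 0. For any μ ∈ L^p(0,T), the function t ↦ ‖μ‖_{L^2(0,t)} satisfies: the L^p(0,T)-norm of t ↦ e^{-γt}·‖μ‖_{L^2(0,t)} is at most C(p,T)·(pγ)^{-1/p}·‖e^{-γ·}μ‖_{L^p(0,T)}, where C(p,T) is a constant independent of γ and μ. In particular, for γ large enough this map is a contraction in the exponentially weighted L^p norm. -/
open MeasureTheory Real Set Filter Topology
open scoped ENNReal NNReal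

lemma exp_lintegral_aux {a : ℝ} (ha : 0 < a) (c : ℝ) :
    ∫⁻ t in Ioi c, ENNReal.ofReal (Real.exp (-(a * (t - c)))) ≤ ENNReal.ofReal a⁻¹ := by
  have hint : IntegrableOn (fun t : ℝ => Real.exp (-(a * (t - c)))) (Ioi c) := by
    have h1 : IntegrableOn (fun t : ℝ => Real.exp (-a * t)) (Ioi c) :=
      exp_neg_integrableOn_Ioi c ha
    have h2 := h1.const_mul (Real.exp (a * c))
    refine IntegrableOn.congr_fun h2 (fun t _ => ?_) measurableSet_Ioi
    rw [← Real.exp_add]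
    congr 1
    ring
  have hval : ∫ t in Ioi c, Real.exp (-(a * (t - c))) = a⁻¹ := by
    have hder : ∀ x ∈ Ici c,
        HasDerivAt (fun t => -(a⁻¹ * Real.exp (-(a * (t - c)))))
          (Real.exp (-(a * (x - c)))) x := by
      intro x _
      have h1 : HasDerivAt (fun t : ℝ => -(a * (t - c))) (-a) x := by
        exact (((hasDerivAt_id x).sub_const c).const_mul a).neg.congr_deriv (by ring)
      have h2 := (h1.exp.const_mul a⁻¹).neg
      refine h2.congr_deriv ?_
      field_simp
    have htend : Tendsto (fun t => -(a⁻¹ * Real.exp (-(a * (t - c))))) atTop (𝓝 0) := by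
      have h1 : Tendsto (fun t : ℝ => -(a * (t - c))) atTop atBot := by
        apply tendsto_neg_atTop_atBot.comp
        exact (tendsto_atTop_add_const_right atTop (-c) tendsto_id).const_mul_atTop ha
      have h2 : Tendsto (fun t => Real.exp (-(a * (t - c)))) atTop (𝓝 0) :=
        Real.tendsto_exp_atBot.comp h1
      have h3 := (h2.const_mul a⁻¹).neg
      simpa using h3
    rw [integral_Ioi_of_hasDerivAt_of_tendsto' hder hint htend]
    simp
  rw [← ofReal_integral_eq_lintegral_ofReal hint
      (Eventually.of_forall fun t => (Real.exp_pos _).le), hval]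

lemma fubini_aux {T a : ℝ} (hT : 0 < T) (ha : 0 < a) {g : ℝ → ℝ}
    (hg : Measurable g) (hg0 : ∀ τ, 0 ≤ g τ) (hgi : IntegrableOn g (Ioc 0 T)) :
    (∫ t in Ioc (0:ℝ) T, Real.exp (-(a * t)) * ∫ τ in Ioc (0:ℝ) t, g τ)
      ≤ a⁻¹ * ∫ τ in Ioc (0:ℝ) T, Real.exp (-(a * τ)) * g τ := by
  set h : ℝ → ℝ := fun τ => Real.exp (-(a * τ)) * g τ with hh
  have hhmeas : Measurable h := by fun_prop
  have hh0 : ∀ τ, 0 ≤ h τ := fun τ => mul_nonneg (Real.exp_pos _).le (hg0 τ)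
  have hhi : IntegrableOn h (Ioc 0 T) := by
    refine Integrable.mono' hgi hhmeas.aestronglyMeasurable ?_
    refine (ae_restrict_iff' measurableSet_Ioc).2 (Eventually.of_forall fun τ hτ => ?_)
    rw [Real.norm_eq_abs, abs_of_nonneg (hh0 τ)]
    calc Real.exp (-(a * τ)) * g τ ≤ 1 * g τ := by
          refine mul_le_mul_of_nonneg_right ?_ (hg0 τ)
          rw [Real.exp_le_one_iff]
          nlinarith [hτ.1]
      _ = g τ := one_mul _
  set J : ℝ → ℝ → ℝ :=
    fun t τ => (Iic t).indicator (fun σ => Real.exp (-(a * (t - σ))) * h σ) τ with hJ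
  have hJ0 : ∀ t τ, 0 ≤ J t τ := fun t τ =>
    indicator_nonneg (fun σ _ => mul_nonneg (Real.exp_pos _).le (hh0 σ)) τ
  have hJm : Measurable (fun z : ℝ × ℝ => J z.1 z.2) := by
    have heq : (fun z : ℝ × ℝ => J z.1 z.2)
        = Set.indicator {z : ℝ × ℝ | z.2 ≤ z.1}
            (fun z => Real.exp (-(a * (z.1 - z.2))) * h z.2) := by
      funext z
      by_cases hz : z.2 ≤ z.1 <;>
        simp [hJ, Set.indicator, hz]
    rw [heq]
    exact Measurable.indicator
      (((measurable_fst.sub measurable_snd).const_mul a).neg.exp.mul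
        (hhmeas.comp measurable_snd))
      (measurableSet_le measurable_snd measurable_fst)
  have hJint : ∀ t : ℝ, IntegrableOn (fun τ => J t τ) (Ioc 0 T) := by
    intro t
    refine Integrable.mono' hhi
      ((hJm.comp (measurable_const.prodMk measurable_id)).aestronglyMeasurable) ?_
    refine Eventually.of_forall fun τ => ?_
    rw [Real.norm_eq_abs, abs_of_nonneg (hJ0 t τ)]
    by_cases hτ : τ ∈ Iic t
    · rw [hJ]
      simp only [indicator_of_mem hτ]
      calc Real.exp (-(a * (t - τ))) * h τ ≤ 1 * h τ := by
            refine mul_le_mul_of_nonneg_right ?_ (hh0 τ)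
            rw [Real.exp_le_one_iff]
            have := hτ.out
            nlinarith
        _ = h τ := one_mul _
    · rw [hJ]
      simp only [indicator_of_notMem hτ]
      exact hh0 τ
  have hstep : ∀ t ∈ Ioc (0:ℝ) T,
      Real.exp (-(a * t)) * (∫ τ in Ioc (0:ℝ) t, g τ) = ∫ τ in Ioc (0:ℝ) T, J t τ := by
    intro t ht
    have h1 : Real.exp (-(a * t)) * (∫ τ in Ioc (0:ℝ) t, g τ)
        = ∫ τ in Ioc (0:ℝ) t, Real.exp (-(a * (t - τ))) * h τ := by
      rw [← integral_const_mul]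
      refine setIntegral_congr_fun measurableSet_Ioc fun τ _ => ?_
      rw [hh]
      rw [show (-(a * t)) = (-(a * (t - τ))) + (-(a * τ)) by ring, Real.exp_add, mul_assoc]
    have h2 : (∫ τ in Ioc (0:ℝ) t, Real.exp (-(a * (t - τ))) * h τ)
        = ∫ τ in Ioc (0:ℝ) T, J t τ := by
      rw [hJ]
      rw [setIntegral_indicator measurableSet_Iic]
      congr 1
      rw [Set.Ioc_inter_Iic, min_eq_right ht.2]
    exact h1.trans h2
  have hInonneg : 0 ≤ ∫ τ in Ioc (0:ℝ) T, h τ := integral_nonneg fun τ => hh0 τ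
  calc (∫ t in Ioc (0:ℝ) T, Real.exp (-(a * t)) * ∫ τ in Ioc (0:ℝ) t, g τ)
      = ∫ t in Ioc (0:ℝ) T, ∫ τ in Ioc (0:ℝ) T, J t τ :=
        setIntegral_congr_fun measurableSet_Ioc fun t ht => hstep t ht
    _ = (∫⁻ t in Ioc (0:ℝ) T, ENNReal.ofReal (∫ τ in Ioc (0:ℝ) T, J t τ)).toReal := by
        rw [integral_eq_lintegral_of_nonneg_ae]
        · exact Eventually.of_forall fun t => integral_nonneg fun τ => hJ0 t τ
        · exact (hJm.stronglyMeasurable.integral_prod_right').aestronglyMeasurable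
    _ ≤ (ENNReal.ofReal (a⁻¹ * ∫ τ in Ioc (0:ℝ) T, h τ)).toReal := by
        refine ENNReal.toReal_mono ENNReal.ofReal_ne_top ?_
        calc ∫⁻ t in Ioc (0:ℝ) T, ENNReal.ofReal (∫ τ in Ioc (0:ℝ) T, J t τ)
            = ∫⁻ t in Ioc (0:ℝ) T, ∫⁻ τ in Ioc (0:ℝ) T, ENNReal.ofReal (J t τ) := by
              refine lintegral_congr fun t => ?_
              exact ofReal_integral_eq_lintegral_ofReal (hJint t)
                (Eventually.of_forall fun τ => hJ0 t τ)
          _ = ∫⁻ τ in Ioc (0:ℝ) T, ∫⁻ t in Ioc (0:ℝ) T, ENNReal.ofReal (J t τ) :=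
              lintegral_lintegral_swap (hJm.ennreal_ofReal.aemeasurable)
          _ ≤ ∫⁻ τ in Ioc (0:ℝ) T, ENNReal.ofReal (h τ) * ENNReal.ofReal a⁻¹ := by
              refine lintegral_mono fun τ => ?_
              calc ∫⁻ t in Ioc (0:ℝ) T, ENNReal.ofReal (J t τ)
                  ≤ ∫⁻ t, ENNReal.ofReal (J t τ) := setLIntegral_le_lintegral _ _
                _ = ∫⁻ t, (Ici τ).indicator
                      (fun t => ENNReal.ofReal (Real.exp (-(a * (t - τ))) * h τ)) t := by
                    refine lintegral_congr fun t => ?_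
                    by_cases htτ : τ ≤ t <;>
                      simp [hJ, Set.indicator, htτ]
                _ = ∫⁻ t in Ici τ, ENNReal.ofReal (Real.exp (-(a * (t - τ))) * h τ) :=
                    lintegral_indicator measurableSet_Ici _
                _ = ∫⁻ t in Ioi τ, ENNReal.ofReal (Real.exp (-(a * (t - τ))) * h τ) :=
                    (setLIntegral_congr Ioi_ae_eq_Ici).symm
                _ = ENNReal.ofReal (h τ) * ∫⁻ t in Ioi τ,
                      ENNReal.ofReal (Real.exp (-(a * (t - τ)))) := by
                    rw [← lintegral_const_mul' _ _ ENNReal.ofReal_ne_top]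
                    refine lintegral_congr fun t => ?_
                    rw [ENNReal.ofReal_mul (Real.exp_pos _).le, mul_comm]
                _ ≤ ENNReal.ofReal (h τ) * ENNReal.ofReal a⁻¹ :=
                    mul_le_mul_right (exp_lintegral_aux ha τ) _
          _ = (∫⁻ τ in Ioc (0:ℝ) T, ENNReal.ofReal (h τ)) * ENNReal.ofReal a⁻¹ :=
              lintegral_mul_const' _ _ ENNReal.ofReal_ne_top
          _ = ENNReal.ofReal (∫ τ in Ioc (0:ℝ) T, h τ) * ENNReal.ofReal a⁻¹ := by
              rw [ofReal_integral_eq_lintegral_ofReal hhi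
                (Eventually.of_forall fun τ => hh0 τ)]
          _ = ENNReal.ofReal (a⁻¹ * ∫ τ in Ioc (0:ℝ) T, h τ) := by
              rw [ENNReal.ofReal_mul (inv_nonneg.2 ha.le), mul_comm]
    _ = a⁻¹ * ∫ τ in Ioc (0:ℝ) T, h τ :=
        ENNReal.toReal_ofReal (mul_nonneg (inv_nonneg.2 ha.le) hInonneg)

lemma holder_aux {p : ℝ} (hp : 2 ≤ p) {t : ℝ} (ht : 0 < t) {μ : ℝ → ℝ} (hμ : Measurable μ)
    (hint : IntegrableOn (fun τ => |μ τ| ^ p) (Ioc 0 t)) :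
    (∫ τ in Ioc (0:ℝ) t, (μ τ) ^ 2)
      ≤ (∫ τ in Ioc (0:ℝ) t, |μ τ| ^ p) ^ ((2:ℝ)/p) * t ^ ((p-2)/p) := by
  have hp0 : (0:ℝ) < p := lt_of_lt_of_le two_pos hp
  rcases eq_or_lt_of_le hp with hp2 | hp2
  · -- p = 2
    have hAB : (∫ τ in Ioc (0:ℝ) t, (μ τ) ^ 2) = ∫ τ in Ioc (0:ℝ) t, |μ τ| ^ p := by
      refine integral_congr_ae (Eventually.of_forall fun τ => ?_)
      show (μ τ) ^ 2 = |μ τ| ^ p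
      rw [← hp2, Real.rpow_two, sq_abs]
    rw [hAB, ← hp2]
    norm_num
  · -- 2 < p
    have hpq : ((p/2) : ℝ).HolderConjugate (p/(p-2)) := by
      rw [Real.holderConjugate_iff]
      constructor
      · linarith
      · have h2 : p - 2 ≠ 0 := by linarith
        have h0 : p ≠ 0 := by linarith
        field_simp
        try ring
    have hq0 : ENNReal.ofReal p ≠ 0 := by
      simp only [ne_eq, ENNReal.ofReal_eq_zero, not_le]
      exact hp0
    have hμLp : MemLp μ (ENNReal.ofReal p) (volume.restrict (Ioc (0:ℝ) t)) := by
      rw [← memLp_norm_rpow_iff hμ.aestronglyMeasurable hq0 ENNReal.ofReal_ne_top]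
      rw [ENNReal.div_self hq0 ENNReal.ofReal_ne_top, memLp_one_iff_integrable]
      simpa [Real.norm_eq_abs, ENNReal.toReal_ofReal hp0.le, IntegrableOn] using hint
    have hf2 : MemLp (fun τ => (μ τ) ^ 2) (ENNReal.ofReal (p/2))
        (volume.restrict (Ioc (0:ℝ) t)) := by
      have h2 : (fun τ => (μ τ) ^ 2) = fun τ => ‖μ τ‖ ^ ((2:ℝ≥0∞)).toReal := by
        funext τ
        rw [Real.norm_eq_abs]
        rw [show ((2:ℝ≥0∞)).toReal = (2:ℝ) by simp]
        rw [Real.rpow_two, sq_abs]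
      have h3 : ENNReal.ofReal (p/2) = ENNReal.ofReal p / 2 := by
        rw [ENNReal.ofReal_div_of_pos two_pos]
        norm_num
      rw [h2, h3, memLp_norm_rpow_iff hμ.aestronglyMeasurable (by norm_num) (by norm_num)]
      exact hμLp
    have hone : MemLp (fun _ : ℝ => (1:ℝ)) (ENNReal.ofReal (p/(p-2)))
        (volume.restrict (Ioc (0:ℝ) t)) := memLp_const 1
    have hH := integral_mul_le_Lp_mul_Lq_of_nonneg hpq
      (Eventually.of_forall fun τ => sq_nonneg (μ τ))
      (Eventually.of_forall fun _ => zero_le_one) hf2 hone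
    simp only [mul_one, Real.one_rpow] at hH
    have e1 : (∫ τ in Ioc (0:ℝ) t, ((μ τ) ^ 2) ^ (p/2))
        = ∫ τ in Ioc (0:ℝ) t, |μ τ| ^ p := by
      refine integral_congr_ae (Eventually.of_forall fun τ => ?_)
      show ((μ τ) ^ 2) ^ (p/2) = |μ τ| ^ p
      rw [← sq_abs, ← Real.rpow_two, ← Real.rpow_mul (abs_nonneg _)]
      rw [show (2:ℝ) * (p/2) = p by ring]
    have e2 : (∫ _ in Ioc (0:ℝ) t, (1:ℝ)) = t := by
      simp [Real.volume_Ioc, ht.le]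
    rw [e1, e2] at hH
    have e3 : 1 / (p/2) = (2:ℝ)/p := by rw [one_div_div]
    have e4 : 1 / (p/(p-2)) = (p-2)/p := by rw [one_div_div]
    rw [e3, e4] at hH
    exact hH

/-- weighted `L^p` estimate for the Volterra map `μ ↦ ‖μ‖_{L²(0,t)}`:
there is `C = C(p,T)` (independent of `γ` and `μ`) with
`‖e^{-γ·} ‖μ‖_{L²(0,·)}‖_{L^p(0,T)} ≤ C (pγ)^{-1/p} ‖e^{-γ·} μ‖_{L^p(0,T)}`. -/
theorem stmt0 (T p : ℝ) (hT : 0 < T) (hp : 2 ≤ p) :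
    ∃ C : ℝ, 0 < C ∧ ∀ γ : ℝ, 0 < γ → ∀ μ : ℝ → ℝ, Measurable μ →
      IntegrableOn (fun t => |μ t| ^ p) (Ioc 0 T) →
      (∫ t in Ioc (0:ℝ) T,
          (Real.exp (-γ * t) * (∫ τ in Ioc (0:ℝ) t, (μ τ) ^ 2) ^ ((1:ℝ)/2)) ^ p) ^ ((1:ℝ)/p)
        ≤ C * (p * γ) ^ (-(1:ℝ)/p) *
          (∫ t in Ioc (0:ℝ) T, Real.exp (-γ * p * t) * |μ t| ^ p) ^ ((1:ℝ)/p) := by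
  have hp0 : (0:ℝ) < p := lt_of_lt_of_le two_pos hp
  refine ⟨T ^ ((p - 2)/(2*p)), Real.rpow_pos_of_pos hT _, ?_⟩
  intro γ hγ μ hμ hμp
  have ha : 0 < γ * p := mul_pos hγ hp0
  set a : ℝ := γ * p with haa
  have hA0 : ∀ t : ℝ, 0 ≤ ∫ τ in Ioc (0:ℝ) t, (μ τ)^2 :=
    fun t => integral_nonneg fun τ => sq_nonneg _
  have hg0 : ∀ τ : ℝ, 0 ≤ |μ τ| ^ p := fun τ => Real.rpow_nonneg (abs_nonneg _) _
  have hgmeas : Measurable (fun τ : ℝ => |μ τ| ^ p) := by fun_prop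
  have hB0 : ∀ t : ℝ, 0 ≤ ∫ τ in Ioc (0:ℝ) t, |μ τ| ^ p :=
    fun t => integral_nonneg fun τ => hg0 τ
  have hpt : ∀ t ∈ Ioc (0:ℝ) T,
      (Real.exp (-γ * t) * (∫ τ in Ioc (0:ℝ) t, (μ τ)^2) ^ ((1:ℝ)/2)) ^ p
        ≤ T ^ ((p-2)/2) * (Real.exp (-(a * t)) * ∫ τ in Ioc (0:ℝ) t, |μ τ| ^ p) := by
    intro t ht
    have hBint : IntegrableOn (fun τ => |μ τ| ^ p) (Ioc 0 t) :=
      hμp.mono_set (Ioc_subset_Ioc_right ht.2)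
    have h1 := holder_aux hp ht.1 hμ hBint
    have e0 : (Real.exp (-γ * t) * (∫ τ in Ioc (0:ℝ) t, (μ τ)^2) ^ ((1:ℝ)/2)) ^ p
        = Real.exp (-(a*t)) * (∫ τ in Ioc (0:ℝ) t, (μ τ)^2) ^ (((1:ℝ)/2) * p) := by
      rw [Real.mul_rpow (Real.exp_pos _).le (Real.rpow_nonneg (hA0 t) _),
          ← Real.exp_mul, ← Real.rpow_mul (hA0 t)]
      congr 2
      rw [haa]; ring
    rw [e0]
    have h2 : (∫ τ in Ioc (0:ℝ) t, (μ τ)^2) ^ (((1:ℝ)/2) * p)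
        ≤ ((∫ τ in Ioc (0:ℝ) t, |μ τ| ^ p) ^ ((2:ℝ)/p) * t ^ ((p-2)/p)) ^ (((1:ℝ)/2)*p) :=
      Real.rpow_le_rpow (hA0 t) h1 (by positivity)
    have h3 : ((∫ τ in Ioc (0:ℝ) t, |μ τ| ^ p) ^ ((2:ℝ)/p) * t ^ ((p-2)/p)) ^ (((1:ℝ)/2)*p)
        = (∫ τ in Ioc (0:ℝ) t, |μ τ| ^ p) * t ^ ((p-2)/2) := by
      rw [Real.mul_rpow (Real.rpow_nonneg (hB0 t) _) (Real.rpow_nonneg ht.1.le _),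
          ← Real.rpow_mul (hB0 t), ← Real.rpow_mul ht.1.le]
      rw [show (2:ℝ)/p * ((1/2)*p) = 1 by field_simp, Real.rpow_one]
      congr 1
      rw [show (p-2)/p * ((1:ℝ)/2*p) = (p-2)/2 by field_simp]
    have h4 : t ^ ((p-2)/2) ≤ T ^ ((p-2)/2) :=
      Real.rpow_le_rpow ht.1.le ht.2 (div_nonneg (by linarith) (by norm_num))
    calc Real.exp (-(a*t)) * (∫ τ in Ioc (0:ℝ) t, (μ τ)^2) ^ (((1:ℝ)/2)*p)
        ≤ Real.exp (-(a*t)) * ((∫ τ in Ioc (0:ℝ) t, |μ τ|^p) * t ^ ((p-2)/2)) :=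
          mul_le_mul_of_nonneg_left (h2.trans_eq h3) (Real.exp_pos _).le
      _ ≤ Real.exp (-(a*t)) * ((∫ τ in Ioc (0:ℝ) t, |μ τ|^p) * T ^ ((p-2)/2)) :=
          mul_le_mul_of_nonneg_left
            (mul_le_mul_of_nonneg_left h4 (hB0 t)) (Real.exp_pos _).le
      _ = T ^ ((p-2)/2) * (Real.exp (-(a*t)) * ∫ τ in Ioc (0:ℝ) t, |μ τ|^p) := by ring
  have hmaj : IntegrableOn
      (fun t => T ^ ((p-2)/2) * (Real.exp (-(a*t)) * ∫ τ in Ioc (0:ℝ) t, |μ τ| ^ p))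
      (Ioc 0 T) := by
    have hIcc : IntegrableOn (fun τ : ℝ => |μ τ| ^ p) (Icc 0 T) :=
      (integrableOn_Icc_iff_integrableOn_Ioc).2 hμp
    have hBcont : ContinuousOn (fun t => ∫ τ in Ioc (0:ℝ) t, |μ τ| ^ p) (Icc 0 T) :=
      intervalIntegral.continuousOn_primitive hIcc
    have hcont : ContinuousOn
        (fun t => Real.exp (-(a*t)) * ∫ τ in Ioc (0:ℝ) t, |μ τ| ^ p) (Icc 0 T) :=
      (Continuous.continuousOn (by fun_prop)).mul hBcont
    exact ((hcont.integrableOn_Icc).mono_set Ioc_subset_Icc_self).const_mul _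
  have hIle : (∫ t in Ioc (0:ℝ) T,
        (Real.exp (-γ * t) * (∫ τ in Ioc (0:ℝ) t, (μ τ)^2) ^ ((1:ℝ)/2)) ^ p)
      ≤ T ^ ((p-2)/2) * (a⁻¹ * ∫ τ in Ioc (0:ℝ) T, Real.exp (-(a*τ)) * |μ τ| ^ p) := by
    have h5 := integral_mono_of_nonneg
      (Eventually.of_forall fun t => Real.rpow_nonneg
        (mul_nonneg (Real.exp_pos _).le (Real.rpow_nonneg (hA0 t) _)) _)
      hmaj ((ae_restrict_iff' measurableSet_Ioc).2 (Eventually.of_forall hpt))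
    refine h5.trans ?_
    rw [integral_const_mul]
    exact mul_le_mul_of_nonneg_left
      (fubini_aux hT ha hgmeas hg0 hμp) (Real.rpow_nonneg hT.le _)
  have hRHS : (∫ t in Ioc (0:ℝ) T, Real.exp (-γ * p * t) * |μ t| ^ p)
      = ∫ τ in Ioc (0:ℝ) T, Real.exp (-(a*τ)) * |μ τ| ^ p := by
    refine integral_congr_ae (Eventually.of_forall fun t => ?_)
    show Real.exp (-γ * p * t) * |μ t| ^ p = Real.exp (-(a*t)) * |μ t| ^ p
    rw [show -γ * p * t = -(a*t) by rw [haa]; ring]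
  rw [hRHS]
  have hI0 : 0 ≤ ∫ τ in Ioc (0:ℝ) T, Real.exp (-(a*τ)) * |μ τ| ^ p :=
    integral_nonneg fun τ => mul_nonneg (Real.exp_pos _).le (hg0 τ)
  have hL0 : 0 ≤ ∫ t in Ioc (0:ℝ) T,
      (Real.exp (-γ*t) * (∫ τ in Ioc (0:ℝ) t, (μ τ)^2) ^ ((1:ℝ)/2)) ^ p :=
    integral_nonneg fun t => Real.rpow_nonneg
      (mul_nonneg (Real.exp_pos _).le (Real.rpow_nonneg (hA0 t) _)) _
  have step := Real.rpow_le_rpow hL0 hIle (by positivity : (0:ℝ) ≤ (1:ℝ)/p)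
  refine step.trans (le_of_eq ?_)
  have hA' : (T ^ ((p-2)/2)) ^ ((1:ℝ)/p) = T ^ ((p-2)/(2*p)) := by
    rw [← Real.rpow_mul hT.le]
    congr 1
    field_simp
    try ring
  have hB' : a⁻¹ ^ ((1:ℝ)/p) = (p*γ) ^ (-(1:ℝ)/p) := by
    have hapg : a = p * γ := by rw [haa]; ring
    have h6 : a⁻¹ = (p*γ) ^ (-1:ℝ) := by
      rw [Real.rpow_neg (mul_nonneg hp0.le hγ.le), Real.rpow_one, hapg]
    rw [h6, ← Real.rpow_mul (mul_nonneg hp0.le hγ.le)]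
    congr 1
    ring
  rw [Real.mul_rpow (Real.rpow_nonneg hT.le _)
        (mul_nonneg (inv_nonneg.2 ha.le) hI0),
      Real.mul_rpow (inv_nonneg.2 ha.le) hI0, hA', hB', mul_assoc]
end

section
/- Let H be a Banach space, p ∈ [1,∞), T > 0, and C > 0. Suppose A : L^p(0,T) → L^p(0,T) satisfies |A f₁(t) − A f₂(t)| ≤ C·(∫₀ᵗ |f₁(τ) − f₂(τ)|² dτ)^{1/2} for a.e. t, for all f₁, f₂ ∈ L^p(0,T) with p ≥ 2. Then A has a unique fixed point in L^p(0,T). -/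
open MeasureTheory Real Set Filter

lemma aux_memL2 {p T : ℝ} (hp : 2 ≤ p) (u : ℝ → ℝ) (hu : Measurable u)
    (hi : IntegrableOn (fun t => |u t| ^ p) (Ioc 0 T)) :
    MemLp u 2 (volume.restrict (Ioc (0:ℝ) T)) := by
  haveI : IsFiniteMeasure (volume.restrict (Ioc (0:ℝ) T)) :=
    ⟨by rw [Measure.restrict_apply_univ]; exact measure_Ioc_lt_top⟩
  have hp0 : (0:ℝ) < p := by linarith
  have hne : (ENNReal.ofReal p) ≠ 0 := by
    simp [ENNReal.ofReal_eq_zero]; linarith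
  have hnt : (ENNReal.ofReal p) ≠ ⊤ := ENNReal.ofReal_ne_top
  have hmp : MemLp u (ENNReal.ofReal p) (volume.restrict (Ioc (0:ℝ) T)) := by
    rw [← memLp_norm_rpow_iff (q := ENNReal.ofReal p) hu.aestronglyMeasurable hne hnt]
    rw [ENNReal.div_self hne hnt, memLp_one_iff_integrable]
    simpa [Real.norm_eq_abs, ENNReal.toReal_ofReal hp0.le] using hi.integrable
  exact hmp.mono_exponent (by
    calc (2 : ENNReal) = ENNReal.ofReal 2 := by norm_num
      _ ≤ ENNReal.ofReal p := ENNReal.ofReal_le_ofReal hp)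

lemma aux_summable_sqrt {x : ℝ} :
    Summable (fun n : ℕ => Real.sqrt (x ^ n / (Nat.factorial n))) := by
  obtain ⟨M, hM⟩ : ∃ M, ∀ n : ℕ, (4 * x) ^ n / (Nat.factorial n) ≤ M := by
    obtain ⟨M, hM⟩ := (Real.summable_pow_div_factorial (4 * x)).tendsto_atTop_zero.bddAbove_range
    exact ⟨M, fun n => hM ⟨n, rfl⟩⟩
  have hM0 : 0 ≤ M := le_trans (by norm_num) (hM 0)
  apply Summable.of_nonneg_of_le (fun n => Real.sqrt_nonneg _) (fun n => ?_)
    ((summable_geometric_of_lt_one (by norm_num) (by norm_num : (1:ℝ)/2 < 1)).mul_left (Real.sqrt M))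
  have h1 : x ^ n / (Nat.factorial n) ≤ M * (1/4) ^ n := by
    have he : x ^ n / (Nat.factorial n) = (4*x) ^ n / (Nat.factorial n) * (1/4) ^ n := by
      rw [mul_pow]; field_simp; rw [mul_assoc, ← mul_pow]; norm_num
    rw [he]
    exact mul_le_mul_of_nonneg_right (hM n) (by positivity)
  calc Real.sqrt (x ^ n / (Nat.factorial n)) ≤ Real.sqrt (M * (1/4) ^ n) := Real.sqrt_le_sqrt h1
    _ = Real.sqrt M * (1/2) ^ n := by
        rw [Real.sqrt_mul hM0,
          show ((1:ℝ)/4) ^ n = (((1:ℝ)/2) ^ n) ^ 2 by rw [← pow_mul, mul_comm, pow_mul]; norm_num,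
          Real.sqrt_sq (by positivity)]

lemma aux_two_bound {a c q : ℝ} (ha : 0 ≤ a) (hc : 0 ≤ c) (hq : 0 ≤ q) :
    (a + c) ^ q ≤ 2 ^ q * (a ^ q + c ^ q) := by
  have key : ∀ u v : ℝ, 0 ≤ u → u ≤ v → (u + v) ^ q ≤ 2 ^ q * (u ^ q + v ^ q) := by
    intro u v hu huv
    have hv : 0 ≤ v := hu.trans huv
    calc (u + v) ^ q ≤ (2 * v) ^ q := by
          apply Real.rpow_le_rpow (by linarith) (by linarith) hq
      _ = 2 ^ q * v ^ q := Real.mul_rpow (by norm_num) hv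
      _ ≤ 2 ^ q * (u ^ q + v ^ q) := by
          have := Real.rpow_nonneg hu q
          nlinarith [Real.rpow_nonneg (le_refl (0:ℝ)) q, Real.rpow_le_rpow (by norm_num : (0:ℝ) ≤ 2) (le_refl (2:ℝ)) hq, Real.rpow_nonneg (by norm_num : (0:ℝ) ≤ 2) q]
  rcases le_total a c with h | h
  · exact key a c ha h
  · have := key c a hc h
    linarith [this, add_comm a c ▸ this]

lemma aux_step_integral (c d t : ℝ) (n : ℕ) (ht : 0 ≤ t) :
    ∫ τ in Ioc (0:ℝ) t, c * (d * (c * τ) ^ n / (Nat.factorial n)) = d * (c * t) ^ (n+1) / (Nat.factorial (n+1)) := by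
  have hfac : (((Nat.factorial n) : ℕ) : ℝ) ≠ 0 := Nat.cast_ne_zero.2 (Nat.factorial_ne_zero n)
  rw [← intervalIntegral.integral_of_le ht]
  have he : ∀ τ : ℝ, c * (d * (c * τ) ^ n / (Nat.factorial n)) = (c ^ (n+1) * d / (Nat.factorial n)) * τ ^ n := by
    intro τ; rw [mul_pow]; field_simp; ring
  simp_rw [he]
  rw [intervalIntegral.integral_const_mul, integral_pow]
  push_cast [Nat.factorial_succ]
  rw [mul_pow]
  field_simp
  ring

lemma aux_int_nonneg {s : Set ℝ} (hs : MeasurableSet s) (u v : ℝ → ℝ) :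
    0 ≤ ∫ τ in s, (u τ - v τ) ^ 2 := setIntegral_nonneg hs (fun τ _ => sq_nonneg _)

/-- an operator `A` on `L^p(0,T)` (`2 ≤ p < ∞`) satisfying the Volterra bound
`|Af₁(t) − Af₂(t)| ≤ C (∫₀ᵗ |f₁ − f₂|²)^{1/2}` has a unique fixed point in `L^p(0,T)`
(unique up to a.e. equality). -/
theorem stmt3 (H : Type*) [NormedAddCommGroup H] [CompleteSpace H]
    (p T C : ℝ) (hp : 2 ≤ p) (hT : 0 < T) (hC : 0 < C)
    (A : (ℝ → ℝ) → (ℝ → ℝ))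
    (hAmap : ∀ f : ℝ → ℝ, Measurable f → IntegrableOn (fun t => |f t| ^ p) (Ioc 0 T) →
      Measurable (A f) ∧ IntegrableOn (fun t => |A f t| ^ p) (Ioc 0 T))
    (hA : ∀ f₁ f₂ : ℝ → ℝ, Measurable f₁ → Measurable f₂ →
      IntegrableOn (fun t => |f₁ t| ^ p) (Ioc 0 T) →
      IntegrableOn (fun t => |f₂ t| ^ p) (Ioc 0 T) →
      ∀ t ∈ Icc (0:ℝ) T,
        |A f₁ t - A f₂ t| ≤ C * (∫ τ in Ioc (0:ℝ) t, (f₁ τ - f₂ τ) ^ 2) ^ ((1:ℝ)/2)) :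
    ∃ f : ℝ → ℝ, (Measurable f ∧ IntegrableOn (fun t => |f t| ^ p) (Ioc 0 T)) ∧
      f =ᵐ[volume.restrict (Ioc (0:ℝ) T)] A f ∧
      ∀ g : ℝ → ℝ, Measurable g → IntegrableOn (fun t => |g t| ^ p) (Ioc 0 T) →
        g =ᵐ[volume.restrict (Ioc (0:ℝ) T)] A g →
        g =ᵐ[volume.restrict (Ioc (0:ℝ) T)] f := by
  classical
  -- integrability of squares of differences
  have hsqint : ∀ u v : ℝ → ℝ, Measurable u → Measurable v →
      IntegrableOn (fun t => |u t| ^ p) (Ioc 0 T) →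
      IntegrableOn (fun t => |v t| ^ p) (Ioc 0 T) →
      ∀ t ≤ T, IntegrableOn (fun τ => (u τ - v τ) ^ 2) (Ioc 0 t) := by
    intro u v hu hv hiu hiv t ht
    have h2 : MemLp (u - v) 2 (volume.restrict (Ioc (0:ℝ) T)) :=
      (aux_memL2 hp u hu hiu).sub (aux_memL2 hp v hv hiv)
    have := h2.integrable_sq
    simp only [Pi.sub_apply] at this
    exact MeasureTheory.IntegrableOn.mono_set this (Ioc_subset_Ioc_right ht)
  -- squared form of the contraction estimate
  have hsq_est : ∀ u v : ℝ → ℝ, Measurable u → Measurable v →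
      IntegrableOn (fun t => |u t| ^ p) (Ioc 0 T) →
      IntegrableOn (fun t => |v t| ^ p) (Ioc 0 T) →
      ∀ t ∈ Icc (0:ℝ) T,
        (A u t - A v t) ^ 2 ≤ C ^ 2 * ∫ τ in Ioc (0:ℝ) t, (u τ - v τ) ^ 2 := by
    intro u v hu hv hiu hiv t ht
    have h := hA u v hu hv hiu hiv t ht
    have hI : 0 ≤ ∫ τ in Ioc (0:ℝ) t, (u τ - v τ) ^ 2 :=
      setIntegral_nonneg measurableSet_Ioc (fun τ _ => sq_nonneg _)
    calc (A u t - A v t) ^ 2 = |A u t - A v t| ^ 2 := (sq_abs _).symm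
      _ ≤ (C * (∫ τ in Ioc (0:ℝ) t, (u τ - v τ) ^ 2) ^ ((1:ℝ)/2)) ^ 2 :=
          pow_le_pow_left₀ (abs_nonneg _) h 2
      _ = C ^ 2 * ∫ τ in Ioc (0:ℝ) t, (u τ - v τ) ^ 2 := by
          rw [mul_pow, ← Real.sqrt_eq_rpow, Real.sq_sqrt hI]
  -- Picard iterates
  set F : ℕ → ℝ → ℝ := fun n => A^[n] (fun _ => 0) with hFdef
  have hF0 : ∀ t, F 0 t = 0 := fun t => rfl
  have hFs : ∀ n, F (n+1) = A (F n) := fun n => Function.iterate_succ_apply' A n _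
  have hFP : ∀ n, Measurable (F n) ∧ IntegrableOn (fun t => |F n t| ^ p) (Ioc 0 T) := by
    intro n
    induction n with
    | zero =>
      refine ⟨measurable_const, ?_⟩
      have : (fun t => |F 0 t| ^ p) = fun _ => (0:ℝ) := by
        funext t; rw [hF0 t, abs_zero, Real.zero_rpow (by positivity)]
      rw [this]; exact integrableOn_const measure_Ioc_lt_top.ne
    | succ n ih =>
      rw [hFs n]; exact hAmap (F n) ih.1 ih.2
  -- the key Picard estimate
  set K : ℝ := C ^ 2 * ∫ τ in Ioc (0:ℝ) T, (F 1 τ - F 0 τ) ^ 2 with hKdef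
  have hK0 : 0 ≤ K := mul_nonneg (sq_nonneg _)
    (setIntegral_nonneg measurableSet_Ioc (fun τ _ => sq_nonneg _))
  have hD : ∀ n, ∀ t ∈ Icc (0:ℝ) T,
      (F (n+2) t - F (n+1) t) ^ 2 ≤ K * (C ^ 2 * t) ^ n / (Nat.factorial n) := by
    intro n
    induction n with
    | zero =>
      intro t ht
      have h := hsq_est (F 1) (F 0) (hFP 1).1 (hFP 0).1 (hFP 1).2 (hFP 0).2 t ht
      rw [← hFs 1, ← hFs 0] at h
      have hmono : (∫ τ in Ioc (0:ℝ) t, (F 1 τ - F 0 τ) ^ 2)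
          ≤ ∫ τ in Ioc (0:ℝ) T, (F 1 τ - F 0 τ) ^ 2 := by
        apply setIntegral_mono_set (hsqint (F 1) (F 0) (hFP 1).1 (hFP 0).1 (hFP 1).2 (hFP 0).2 T le_rfl)
          (Eventually.of_forall (fun τ => sq_nonneg _))
          (HasSubset.Subset.eventuallyLE (Ioc_subset_Ioc_right ht.2))
      simpa using h.trans (by nlinarith [sq_nonneg C] : C ^ 2 * ∫ τ in Ioc (0:ℝ) t, (F 1 τ - F 0 τ) ^ 2 ≤ K)
    | succ n ih =>
      intro t ht
      have h := hsq_est (F (n+2)) (F (n+1)) (hFP (n+2)).1 (hFP (n+1)).1 (hFP (n+2)).2 (hFP (n+1)).2 t ht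
      rw [← hFs (n+2), ← hFs (n+1)] at h
      have hint1 : IntegrableOn (fun τ => (F (n+2) τ - F (n+1) τ) ^ 2) (Ioc 0 t) :=
        hsqint (F (n+2)) (F (n+1)) (hFP (n+2)).1 (hFP (n+1)).1 (hFP (n+2)).2 (hFP (n+1)).2 t ht.2
      have hint2 : IntegrableOn (fun τ => K * (C ^ 2 * τ) ^ n / (Nat.factorial n)) (Ioc 0 t) :=
        ((by fun_prop : Continuous fun τ : ℝ => K * (C ^ 2 * τ) ^ n / (Nat.factorial n))).integrableOn_Ioc
      have hmono : (∫ τ in Ioc (0:ℝ) t, (F (n+2) τ - F (n+1) τ) ^ 2)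
          ≤ ∫ τ in Ioc (0:ℝ) t, K * (C ^ 2 * τ) ^ n / (Nat.factorial n) := by
        apply setIntegral_mono_on hint1 hint2 measurableSet_Ioc
        intro τ hτ
        exact ih τ ⟨hτ.1.le, hτ.2.trans ht.2⟩
      calc (F (n+3) t - F (n+2) t) ^ 2
          ≤ C ^ 2 * ∫ τ in Ioc (0:ℝ) t, (F (n+2) τ - F (n+1) τ) ^ 2 := h
        _ ≤ C ^ 2 * ∫ τ in Ioc (0:ℝ) t, K * (C ^ 2 * τ) ^ n / (Nat.factorial n) :=
            mul_le_mul_of_nonneg_left hmono (sq_nonneg C)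
        _ = ∫ τ in Ioc (0:ℝ) t, C ^ 2 * (K * (C ^ 2 * τ) ^ n / (Nat.factorial n)) := by
            rw [← MeasureTheory.integral_const_mul]
        _ = K * (C ^ 2 * t) ^ (n+1) / (Nat.factorial (n+1)) :=
            aux_step_integral (C ^ 2) K t n ht.1
  -- uniform bounds and Cauchy sequence
  set b : ℕ → ℝ := fun n => Real.sqrt (K * (C ^ 2 * T) ^ n / (Nat.factorial n)) with hbdef
  have hb0 : ∀ n, 0 ≤ b n := fun n => Real.sqrt_nonneg _
  have hb : ∀ n, ∀ t ∈ Icc (0:ℝ) T, |F (n+2) t - F (n+1) t| ≤ b n := by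
    intro n t ht
    rw [← Real.sqrt_sq_eq_abs]
    apply Real.sqrt_le_sqrt
    refine (hD n t ht).trans ?_
    have : (C ^ 2 * t) ^ n ≤ (C ^ 2 * T) ^ n :=
      pow_le_pow_left₀ (mul_nonneg (sq_nonneg C) ht.1) (mul_le_mul_of_nonneg_left ht.2 (sq_nonneg C)) n
    have hfac : (0:ℝ) < (Nat.factorial n : ℝ) := Nat.cast_pos.2 (Nat.factorial_pos n)
    gcongr
  have hbsum : Summable b := by
    have : Summable fun n : ℕ => Real.sqrt K * Real.sqrt ((C ^ 2 * T) ^ n / (Nat.factorial n)) :=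
      (aux_summable_sqrt (x := C ^ 2 * T)).mul_left _
    apply this.congr
    intro n
    simp only [hbdef]
    rw [mul_div_assoc, Real.sqrt_mul hK0]
  set G : ℕ → ℝ → ℝ := fun n => (Icc (0:ℝ) T).indicator (F (n+1)) with hGdef
  have hGmeas : ∀ n, Measurable (G n) := fun n => ((hFP (n+1)).1).indicator measurableSet_Icc
  have hGdist : ∀ n t, dist (G n t) (G (n+1) t) ≤ b n := by
    intro n t
    by_cases ht : t ∈ Icc (0:ℝ) T
    · rw [hGdef]
      simp only [indicator_of_mem ht]
      rw [Real.dist_eq, abs_sub_comm]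
      exact hb n t ht
    · rw [hGdef]
      simp only [indicator_of_notMem ht]
      simpa using hb0 n
  have hcauchy : ∀ t, ∃ l, Tendsto (fun n => G n t) atTop (nhds l) := fun t =>
    cauchySeq_tendsto_of_complete (cauchySeq_of_dist_le_of_summable b (fun n => hGdist n t) hbsum)
  set f : ℝ → ℝ := fun t => (hcauchy t).choose with hfdef
  have hftend : ∀ t, Tendsto (fun n => G n t) atTop (nhds (f t)) := fun t => (hcauchy t).choose_spec
  have hfmeas : Measurable f :=
    measurable_of_tendsto_metrizable' atTop hGmeas (tendsto_pi_nhds.2 hftend)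
  set tail : ℕ → ℝ := fun n => ∑' m, b (n + m) with htaildef
  have hdist_f : ∀ n t, dist (G n t) (f t) ≤ tail n := fun n t =>
    dist_le_tsum_of_dist_le_of_tendsto b (fun k => hGdist k t) hbsum (hftend t) n
  have htail0 : Tendsto tail atTop (nhds 0) := by
    apply (tendsto_sum_nat_add b).congr
    intro n
    exact tsum_congr fun m => by rw [add_comm]
  have htail_nonneg : ∀ n, 0 ≤ tail n := fun n => tsum_nonneg (fun m => hb0 _)
  have hf_near : ∀ n, ∀ t ∈ Icc (0:ℝ) T, |f t - F (n+1) t| ≤ tail n := by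
    intro n t ht
    have := hdist_f n t
    rw [Real.dist_eq, abs_sub_comm] at this
    rw [hGdef] at this
    simpa only [indicator_of_mem ht] using this
  -- f is in Lp
  have hp0 : (0:ℝ) ≤ p := by linarith
  have hfint : IntegrableOn (fun t => |f t| ^ p) (Ioc 0 T) := by
    have hg : IntegrableOn (fun t => 2 ^ p * (|F 1 t| ^ p + (tail 0) ^ p)) (Ioc 0 T) := by
      apply Integrable.const_mul
      exact (hFP 1).2.add (integrableOn_const measure_Ioc_lt_top.ne)
    apply Integrable.mono' hg ((hfmeas.abs.pow_const _).aestronglyMeasurable)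
    filter_upwards [ae_restrict_mem measurableSet_Ioc] with t ht
    have ht' : t ∈ Icc (0:ℝ) T := ⟨ht.1.le, ht.2⟩
    have h1 : |f t| ≤ |F 1 t| + tail 0 := by
      have := hf_near 0 t ht'
      calc |f t| = |F 1 t + (f t - F 1 t)| := by ring_nf
        _ ≤ |F 1 t| + |f t - F 1 t| := abs_add_le _ _
        _ ≤ |F 1 t| + tail 0 := by linarith
    rw [Real.norm_eq_abs, abs_of_nonneg (Real.rpow_nonneg (abs_nonneg _) p)]
    calc |f t| ^ p ≤ (|F 1 t| + tail 0) ^ p :=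
          Real.rpow_le_rpow (abs_nonneg _) h1 hp0
      _ ≤ 2 ^ p * (|F 1 t| ^ p + (tail 0) ^ p) :=
          aux_two_bound (abs_nonneg _) (htail_nonneg 0) hp0
  -- f is a fixed point, pointwise on [0, T]
  have hfix : ∀ t ∈ Icc (0:ℝ) T, A f t = f t := by
    intro t ht
    have key : ∀ n : ℕ, |A f t - f t| ≤ C * Real.sqrt T * tail n + tail (n+1) := by
      intro n
      have h1 : |A f t - F (n+2) t| ≤ C * Real.sqrt T * tail n := by
        have hsq := hsq_est f (F (n+1)) hfmeas (hFP (n+1)).1 hfint (hFP (n+1)).2 t ht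
        rw [← hFs (n+1)] at hsq
        have hmono : (∫ τ in Ioc (0:ℝ) t, (f τ - F (n+1) τ) ^ 2) ≤ (tail n) ^ 2 * T := by
          have hb2 : (∫ τ in Ioc (0:ℝ) t, (f τ - F (n+1) τ) ^ 2)
              ≤ ∫ τ in Ioc (0:ℝ) t, (tail n) ^ 2 := by
            apply setIntegral_mono_on
              (hsqint f (F (n+1)) hfmeas (hFP (n+1)).1 hfint (hFP (n+1)).2 t ht.2)
              (integrableOn_const measure_Ioc_lt_top.ne) measurableSet_Ioc
            intro τ hτ
            have hτ' : τ ∈ Icc (0:ℝ) T := ⟨hτ.1.le, hτ.2.trans ht.2⟩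
            have := hf_near n τ hτ'
            nlinarith [abs_nonneg (f τ - F (n+1) τ), sq_abs (f τ - F (n+1) τ)]
          have hc : (∫ τ in Ioc (0:ℝ) t, (tail n) ^ 2) = (tail n) ^ 2 * t := by
            rw [setIntegral_const, measureReal_def, Real.volume_Ioc, smul_eq_mul,
              ENNReal.toReal_ofReal (by linarith [ht.1] : (0:ℝ) ≤ t - 0)]
            ring
          rw [hc] at hb2
          refine hb2.trans ?_
          nlinarith [sq_nonneg (tail n), ht.2]
        rw [← Real.sqrt_sq_eq_abs]
        have : (A f t - F (n+2) t) ^ 2 ≤ (C * Real.sqrt T * tail n) ^ 2 := by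
          refine hsq.trans ?_
          have hrhs : (C * Real.sqrt T * tail n) ^ 2 = C ^ 2 * ((tail n) ^ 2 * T) := by
            rw [mul_pow, mul_pow, Real.sq_sqrt hT.le]; ring
          rw [hrhs]
          exact mul_le_mul_of_nonneg_left hmono (sq_nonneg C)
        calc Real.sqrt ((A f t - F (n+2) t) ^ 2) ≤ Real.sqrt ((C * Real.sqrt T * tail n) ^ 2) :=
              Real.sqrt_le_sqrt this
          _ = C * Real.sqrt T * tail n := Real.sqrt_sq (mul_nonneg (mul_nonneg hC.le (Real.sqrt_nonneg T)) (htail_nonneg n))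
      have h2 : |F (n+2) t - f t| ≤ tail (n+1) := by
        rw [abs_sub_comm]; exact hf_near (n+1) t ht
      calc |A f t - f t| = |(A f t - F (n+2) t) + (F (n+2) t - f t)| := by ring_nf
        _ ≤ |A f t - F (n+2) t| + |F (n+2) t - f t| := abs_add_le _ _
        _ ≤ C * Real.sqrt T * tail n + tail (n+1) := add_le_add h1 h2
    have hlim : Tendsto (fun n : ℕ => C * Real.sqrt T * tail n + tail (n+1)) atTop (nhds 0) := by
      have h1 : Tendsto (fun n : ℕ => C * Real.sqrt T * tail n) atTop (nhds 0) := by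
        simpa using htail0.const_mul (C * Real.sqrt T)
      have h2 : Tendsto (fun n : ℕ => tail (n+1)) atTop (nhds 0) :=
        htail0.comp (tendsto_add_atTop_nat 1)
      simpa using h1.add h2
    have : |A f t - f t| ≤ 0 := ge_of_tendsto' hlim key
    have : |A f t - f t| = 0 := le_antisymm this (abs_nonneg _)
    have := abs_eq_zero.1 this
    linarith [sub_eq_zero.1 this]
  -- conclusion
  refine ⟨f, ⟨hfmeas, hfint⟩, ?_, ?_⟩
  · filter_upwards [ae_restrict_mem measurableSet_Ioc] with t ht
    exact (hfix t ⟨ht.1.le, ht.2⟩).symm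
  · -- uniqueness
    intro g hgmeas hgint hgfix
    set e : ℝ → ℝ := fun τ => (g τ - f τ) ^ 2 with hedef
    have he_int : IntegrableOn e (Ioc 0 T) := hsqint g f hgmeas hfmeas hgint hfint T le_rfl
    set φ : ℝ → ℝ := fun t => ∫ τ in Ioc (0:ℝ) t, e τ with hφdef
    set E : ℝ := φ T with hEdef
    have hE0 : 0 ≤ E := setIntegral_nonneg measurableSet_Ioc (fun τ _ => sq_nonneg _)
    have hae : ∀ᵐ t ∂(volume.restrict (Ioc (0:ℝ) T)), e t ≤ C ^ 2 * φ t := by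
      filter_upwards [hgfix, ae_restrict_mem measurableSet_Ioc] with t hgt ht
      have h2 := hsq_est g f hgmeas hfmeas hgint hfint t ⟨ht.1.le, ht.2⟩
      rw [← hgt, hfix t ⟨ht.1.le, ht.2⟩] at h2
      exact h2
    have claim : ∀ n : ℕ, ∀ t ∈ Icc (0:ℝ) T, φ t ≤ E * (C ^ 2 * t) ^ n / (Nat.factorial n) := by
      intro n
      induction n with
      | zero =>
        intro t ht
        have : φ t ≤ E := by
          apply setIntegral_mono_set he_int
            (Eventually.of_forall (fun τ => sq_nonneg _))
            (HasSubset.Subset.eventuallyLE (Ioc_subset_Ioc_right ht.2))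
        simpa using this
      | succ n ih =>
        intro t ht
        have hsub : Ioc (0:ℝ) t ⊆ Ioc (0:ℝ) T := Ioc_subset_Ioc_right ht.2
        have hae' : ∀ᵐ τ ∂(volume.restrict (Ioc (0:ℝ) t)),
            e τ ≤ C ^ 2 * (E * (C ^ 2 * τ) ^ n / (Nat.factorial n)) := by
          have hres : ∀ᵐ τ ∂(volume.restrict (Ioc (0:ℝ) t)), e τ ≤ C ^ 2 * φ τ :=
            hae.filter_mono (ae_mono (Measure.restrict_mono hsub le_rfl))
          filter_upwards [hres, ae_restrict_mem measurableSet_Ioc] with τ h1 h2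
          refine h1.trans ?_
          exact mul_le_mul_of_nonneg_left (ih τ ⟨h2.1.le, h2.2.trans ht.2⟩) (sq_nonneg C)
        have hint2 : IntegrableOn (fun τ => C ^ 2 * (E * (C ^ 2 * τ) ^ n / (Nat.factorial n))) (Ioc 0 t) :=
          ((by fun_prop : Continuous fun τ : ℝ =>
            C ^ 2 * (E * (C ^ 2 * τ) ^ n / (Nat.factorial n)))).integrableOn_Ioc
        calc φ t ≤ ∫ τ in Ioc (0:ℝ) t, C ^ 2 * (E * (C ^ 2 * τ) ^ n / (Nat.factorial n)) :=
              integral_mono_ae (he_int.mono_set hsub) hint2 hae'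
          _ = E * (C ^ 2 * t) ^ (n+1) / (Nat.factorial (n+1)) :=
              aux_step_integral (C ^ 2) E t n ht.1
    have hEzero : E = 0 := by
      have hlim : Tendsto (fun n : ℕ => E * (C ^ 2 * T) ^ n / (Nat.factorial n)) atTop (nhds 0) := by
        have := (Real.summable_pow_div_factorial (C ^ 2 * T)).tendsto_atTop_zero
        have h2 := this.const_mul E
        simpa [mul_div_assoc] using h2
      have hle : E ≤ 0 := ge_of_tendsto' hlim (fun n => claim n T ⟨hT.le, le_rfl⟩)
      linarith
    have hzero : e =ᵐ[volume.restrict (Ioc (0:ℝ) T)] 0 := by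
      rw [← integral_eq_zero_iff_of_nonneg_ae (Eventually.of_forall (fun τ => sq_nonneg _)) he_int]
      exact hEzero
    filter_upwards [hzero] with t hzt
    have : (g t - f t) ^ 2 = 0 := hzt
    have := pow_eq_zero_iff (n := 2) (by norm_num) |>.1 this
    linarith [sub_eq_zero.1 this]
end

section
/- Let T, L > 0 and set X(Q_T) = C([0,T]; L²(0,L)) ∩ L²(0,T; H²(0,L)) with norm ‖v‖_X = max_{t∈[0,T]}‖v(t,·)‖_{L²(0,L)} + ‖v_{xx}‖_{L²(Q_T)}. Then there is a constant C(L) such that for every v ∈ X(Q_T), ‖v²‖_{L²(Q_T)} ≤ C(L)·(T^{1/2} + T^{1/4})·‖v‖²_{X(Q_T)}. -/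
open MeasureTheory Set


lemma aux_quad {y a b : ℝ} (hy : 0 ≤ y) (ha : 0 ≤ a) (hb : 0 ≤ b)
    (h : y ^ 2 ≤ a + b * y) : y ≤ b + Real.sqrt a := by
  nlinarith [Real.sq_sqrt ha, Real.sqrt_nonneg a, sq_nonneg (y - Real.sqrt a),
    sq_nonneg (y - b - Real.sqrt a)]

lemma aux_cs {μ : Measure ℝ} (f g : ℝ → ℝ)
    (h0 : Integrable (fun x => |f x * g x|) μ)
    (hf : Integrable (fun x => f x ^ 2) μ) (hg : Integrable (fun x => g x ^ 2) μ) :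
    ∫ x, |f x * g x| ∂μ ≤
      Real.sqrt (∫ x, f x ^ 2 ∂μ) * Real.sqrt (∫ x, g x ^ 2 ∂μ) := by
  set F := ∫ x, f x ^ 2 ∂μ with hFdef
  set G := ∫ x, g x ^ 2 ∂μ with hGdef
  have hF0 : 0 ≤ F := integral_nonneg fun x => sq_nonneg _
  have hG0 : 0 ≤ G := integral_nonneg fun x => sq_nonneg _
  rcases eq_or_lt_of_le hF0 with hF | hF
  · have hae : (fun x => f x ^ 2) =ᵐ[μ] 0 :=
      (integral_eq_zero_iff_of_nonneg (fun x => sq_nonneg _) hf).1 hF.symm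
    have : (fun x => |f x * g x|) =ᵐ[μ] 0 := by
      filter_upwards [hae] with x hx
      have : f x = 0 := by simpa [pow_eq_zero_iff] using hx
      simp [this]
    rw [integral_congr_ae this]
    simp
    positivity
  rcases eq_or_lt_of_le hG0 with hG | hG
  · have hae : (fun x => g x ^ 2) =ᵐ[μ] 0 :=
      (integral_eq_zero_iff_of_nonneg (fun x => sq_nonneg _) hg).1 hG.symm
    have : (fun x => |f x * g x|) =ᵐ[μ] 0 := by
      filter_upwards [hae] with x hx
      have : g x = 0 := by simpa [pow_eq_zero_iff] using hx
      simp [this]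
    rw [integral_congr_ae this]
    simp
    positivity
  · set e := Real.sqrt G / Real.sqrt F with he
    have hsF : 0 < Real.sqrt F := Real.sqrt_pos.2 hF
    have hsG : 0 < Real.sqrt G := Real.sqrt_pos.2 hG
    have he0 : 0 < e := div_pos hsG hsF
    have hpt : ∀ x, |f x * g x| ≤ (e * f x ^ 2 + g x ^ 2 / e) / 2 := by
      intro x
      have h1 : |f x * g x| = |f x| * |g x| := abs_mul _ _
      have h4 : f x ^ 2 = |f x| ^ 2 := (sq_abs _).symm
      have h5 : g x ^ 2 = |g x| ^ 2 := (sq_abs _).symm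
      rw [h1, h4, h5]
      have key : 2 * e * (|f x| * |g x|) ≤ e ^ 2 * |f x| ^ 2 + |g x| ^ 2 := by
        nlinarith [sq_nonneg (e * |f x| - |g x|)]
      rw [le_div_iff₀ (by norm_num : (0:ℝ) < 2), ← sub_nonneg]
      have heq : (e * |f x| ^ 2 + |g x| ^ 2 / e) - |f x| * |g x| * 2 =
          (e ^ 2 * |f x| ^ 2 + |g x| ^ 2 - 2 * e * (|f x| * |g x|)) / e := by
        field_simp
      rw [heq]
      exact div_nonneg (by linarith) he0.le
    have hint : Integrable (fun x => (e * f x ^ 2 + g x ^ 2 / e) / 2) μ :=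
      ((hf.const_mul e).add (hg.div_const e)).div_const 2
    have h6 : ∫ x, |f x * g x| ∂μ ≤ ∫ x, (e * f x ^ 2 + g x ^ 2 / e) / 2 ∂μ :=
      integral_mono h0 hint hpt
    have h7 : ∫ x, (e * f x ^ 2 + g x ^ 2 / e) / 2 ∂μ = (e * F + G / e) / 2 := by
      rw [integral_div, integral_add (hf.const_mul e) (hg.div_const e),
        integral_const_mul, integral_div]
    rw [h7] at h6
    have heF : e * F = Real.sqrt F * Real.sqrt G := by
      have hs := Real.mul_self_sqrt hF0; rw [he, div_mul_eq_mul_div, div_eq_iff hsF.ne']; linear_combination (-Real.sqrt G) * hs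
    have heG : G / e = Real.sqrt F * Real.sqrt G := by
      have hs := Real.mul_self_sqrt hG0; rw [he, div_div_eq_mul_div, div_eq_iff hsG.ne']; linear_combination (-Real.sqrt F) * hs
    calc ∫ x, |f x * g x| ∂μ ≤ (e * F + G / e) / 2 := h6
      _ = Real.sqrt F * Real.sqrt G := by rw [heF, heG]; ring

set_option maxHeartbeats 1000000 in
lemma slice7 {L : ℝ} (hL : 0 < L) (f f1 f2 : ℝ → ℝ)
    (hfc : Continuous f)
    (hd1 : ∀ x ∈ Icc (0:ℝ) L, HasDerivAt f (f1 x) x)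
    (hd2 : ∀ x ∈ Icc (0:ℝ) L, HasDerivAt f1 (f2 x) x)
    (hms : AEStronglyMeasurable f2 (volume.restrict (Ioc 0 L)))
    (hR : IntegrableOn (fun x => f2 x ^ 2) (Ioc 0 L)) :
    ∫ x in Ioc (0:ℝ) L, f x ^ 4 ≤
      21 * (∫ x in Ioc (0:ℝ) L, f x ^ 2) ^ 2 / L +
      4 * L * (∫ x in Ioc (0:ℝ) L, f x ^ 2) * Real.sqrt (∫ x in Ioc (0:ℝ) L, f x ^ 2) *
        Real.sqrt (∫ x in Ioc (0:ℝ) L, f2 x ^ 2) := by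
  set P := ∫ x in Ioc (0:ℝ) L, f x ^ 2 with hPdef
  set R := ∫ x in Ioc (0:ℝ) L, f2 x ^ 2 with hRdef
  have hc1 : ContinuousOn f1 (Icc (0:ℝ) L) := fun x hx =>
    ((hd2 x hx).continuousAt).continuousWithinAt
  have hm1 : AEStronglyMeasurable f1 (volume.restrict (Ioc (0:ℝ) L)) :=
    (hc1.mono Ioc_subset_Icc_self).aestronglyMeasurable measurableSet_Ioc
  have iP : IntegrableOn (fun x => f x ^ 2) (Ioc (0:ℝ) L) := (hfc.pow 2).integrableOn_Ioc
  have i4 : IntegrableOn (fun x => f x ^ 4) (Ioc (0:ℝ) L) := (hfc.pow 4).integrableOn_Ioc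
  have iQ : IntegrableOn (fun x => f1 x ^ 2) (Ioc (0:ℝ) L) :=
    ((hc1.pow 2).integrableOn_Icc).mono_set Ioc_subset_Icc_self
  set Q := ∫ x in Ioc (0:ℝ) L, f1 x ^ 2 with hQdef
  have hP0 : 0 ≤ P := setIntegral_nonneg measurableSet_Ioc fun x _ => sq_nonneg _
  have hQ0 : 0 ≤ Q := setIntegral_nonneg measurableSet_Ioc fun x _ => sq_nonneg _
  have hR0 : 0 ≤ R := setIntegral_nonneg measurableSet_Ioc fun x _ => sq_nonneg _
  have iff1 : IntegrableOn (fun x => |f x * f1 x|) (Ioc (0:ℝ) L) :=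
    (((hfc.continuousOn.mul hc1).abs).integrableOn_Icc).mono_set Ioc_subset_Icc_self
  have if1f2 : IntegrableOn (fun x => f1 x * f2 x) (Ioc (0:ℝ) L) := by
    refine Integrable.mono' ((iQ.add hR).div_const 2) (hm1.mul hms) (ae_of_all _ fun x => ?_)
    simp only [Pi.add_apply, Real.norm_eq_abs, abs_mul]
    nlinarith [sq_nonneg (|f1 x| - |f2 x|), sq_abs (f1 x), sq_abs (f2 x),
      abs_nonneg (f1 x), abs_nonneg (f2 x)]
  have if1f2abs : IntegrableOn (fun x => |f1 x * f2 x|) (Ioc (0:ℝ) L) := if1f2.abs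
  -- generic FTC bound
  have ftc : ∀ (g g' : ℝ → ℝ), (∀ x ∈ Icc (0:ℝ) L, HasDerivAt g (g' x) x) →
      IntegrableOn g' (Icc (0:ℝ) L) →
      ∀ x ∈ Icc (0:ℝ) L, ∀ y ∈ Icc (0:ℝ) L,
        g x ≤ g y + ∫ s in Ioc (0:ℝ) L, |g' s| := by
    intro g g' hg hg' x hx y hy
    have hsub : uIcc y x ⊆ Icc (0:ℝ) L := uIcc_subset_Icc hy hx
    have hii : IntervalIntegrable g' volume y x := (hg'.mono_set hsub).intervalIntegrable
    have heq : ∫ s in y..x, g' s = g x - g y :=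
      intervalIntegral.integral_eq_sub_of_hasDerivAt (fun s hs => hg s (hsub hs)) hii
    have h1 : g x - g y ≤ |∫ s in y..x, g' s| := heq ▸ le_abs_self _
    have h2 : |∫ s in y..x, g' s| ≤ ∫ s in uIoc y x, |g' s| := by
      simpa [Real.norm_eq_abs] using
        intervalIntegral.norm_integral_le_integral_norm_uIoc (f := g') (a := y) (b := x)
          (μ := volume)
    have h3 : ∫ s in uIoc y x, |g' s| ≤ ∫ s in Ioc (0:ℝ) L, |g' s| := by
      refine setIntegral_mono_set ((hg'.mono_set Ioc_subset_Icc_self).abs)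
        (ae_of_all _ fun s => abs_nonneg _) (HasSubset.Subset.eventuallyLE ?_)
      rw [uIoc]
      exact Ioc_subset_Ioc (le_min hy.1 hx.1) (max_le hy.2 hx.2)
    linarith
  set I := ∫ s in Ioc (0:ℝ) L, |f s * f1 s| with hIdef
  set J := ∫ s in Ioc (0:ℝ) L, |f1 s * f2 s| with hJdef
  -- pointwise bound on f²
  have hA2 : ∀ x ∈ Icc (0:ℝ) L, ∀ y ∈ Icc (0:ℝ) L, f x ^ 2 ≤ f y ^ 2 + 2 * I := by
    intro x hx y hy
    have hgd : ∀ z ∈ Icc (0:ℝ) L, HasDerivAt (fun s => f s ^ 2) (2 * f z * f1 z) z := by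
      intro z hz
      have h := (hd1 z hz).pow 2
      norm_num at h
      exact h
    have igd : IntegrableOn (fun s => 2 * f s * f1 s) (Icc (0:ℝ) L) :=
      ((continuous_const.mul hfc).continuousOn.mul hc1).integrableOn_Icc
    have h := ftc _ _ hgd igd x hx y hy
    have heq2 : ∫ s in Ioc (0:ℝ) L, |2 * f s * f1 s| = 2 * I := by
      rw [hIdef, ← integral_const_mul]
      refine setIntegral_congr_fun measurableSet_Ioc fun s _ => ?_
      rw [show 2 * f s * f1 s = 2 * (f s * f1 s) by ring, abs_mul]
      norm_num
    rw [heq2] at h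
    exact h
  have hIcs : I ≤ Real.sqrt P * Real.sqrt Q := aux_cs f f1 iff1 iP iQ
  set SB := P / L + 2 * Real.sqrt P * Real.sqrt Q with hSBdef
  have hSB0 : 0 ≤ SB := by positivity
  have hSB : ∀ x ∈ Icc (0:ℝ) L, f x ^ 2 ≤ SB := by
    intro x hx
    have hb : ∀ y ∈ Ioc (0:ℝ) L, (fun _ : ℝ => f x ^ 2) y ≤ f y ^ 2 + 2 * I := fun y hy =>
      hA2 x hx y (Ioc_subset_Icc_self hy)
    have hint2 : IntegrableOn (fun _ : ℝ => 2 * I) (Ioc (0:ℝ) L) :=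
      integrableOn_const measure_Ioc_lt_top.ne
    have hadd : ∫ y in Ioc (0:ℝ) L, (f y ^ 2 + 2 * I) = P + L * (2 * I) := by
      rw [integral_add iP hint2, setIntegral_const, Real.volume_real_Ioc_of_le hL.le, sub_zero,
        smul_eq_mul]
    have hconst : ∫ _y in Ioc (0:ℝ) L, (f x ^ 2) = L * f x ^ 2 := by
      rw [setIntegral_const, Real.volume_real_Ioc_of_le hL.le, sub_zero,
        smul_eq_mul]
    have hmono : L * f x ^ 2 ≤ P + L * (2 * I) := by
      rw [← hadd, ← hconst]
      exact setIntegral_mono_on (integrableOn_const measure_Ioc_lt_top.ne)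
        (by exact iP.add hint2) measurableSet_Ioc hb
    have hfx : f x ^ 2 ≤ P / L + 2 * I := by
      rw [div_add' _ _ _ hL.ne', le_div_iff₀ hL]
      nlinarith [hmono]
    refine hfx.trans ?_
    rw [hSBdef]
    nlinarith [hIcs]
  -- MVT
  obtain ⟨ξ, hξmem, hξ⟩ := exists_hasDerivAt_eq_slope f f1 hL hfc.continuousOn
    (fun x hx => hd1 x (Ioo_subset_Icc_self hx))
  have hξIcc : ξ ∈ Icc (0:ℝ) L := Ioo_subset_Icc_self hξmem
  have hfL : |f L| ≤ Real.sqrt SB := Real.abs_le_sqrt (hSB L (right_mem_Icc.2 hL.le))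
  have hf0 : |f 0| ≤ Real.sqrt SB := Real.abs_le_sqrt (hSB 0 (left_mem_Icc.2 hL.le))
  have hξ2 : f1 ξ ^ 2 ≤ 4 * SB / L ^ 2 := by
    rw [hξ, sub_zero, div_pow]
    have hsq : (f L - f 0) ^ 2 ≤ 4 * SB := by
      nlinarith [Real.sq_sqrt hSB0, Real.sqrt_nonneg SB, abs_nonneg (f L - f 0),
        sq_abs (f L - f 0), abs_sub (f L) (f 0), sq_abs (f L), sq_abs (f 0),
        abs_nonneg (f L), abs_nonneg (f 0)]
    gcongr
  -- f1 pointwise bound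
  have hC : ∀ x ∈ Icc (0:ℝ) L, f1 x ^ 2 ≤ f1 ξ ^ 2 + 2 * J := by
    intro x hx
    have hgd2 : ∀ z ∈ Icc (0:ℝ) L, HasDerivAt (fun s => f1 s ^ 2) (2 * f1 z * f2 z) z := by
      intro z hz
      have h := (hd2 z hz).pow 2
      norm_num at h
      exact h
    have igd2 : IntegrableOn (fun s => 2 * f1 s * f2 s) (Icc (0:ℝ) L) := by
      rw [integrableOn_Icc_iff_integrableOn_Ioc]
      have : (fun s => 2 * f1 s * f2 s) = fun s => 2 * (f1 s * f2 s) := by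
        funext s; ring
      rw [this]
      exact if1f2.const_mul 2
    have h := ftc _ _ hgd2 igd2 x hx ξ hξIcc
    have heq2 : ∫ s in Ioc (0:ℝ) L, |2 * f1 s * f2 s| = 2 * J := by
      rw [hJdef, ← integral_const_mul]
      refine setIntegral_congr_fun measurableSet_Ioc fun s _ => ?_
      rw [show 2 * f1 s * f2 s = 2 * (f1 s * f2 s) by ring, abs_mul]
      norm_num
    rw [heq2] at h
    exact h
  have hJcs : J ≤ Real.sqrt Q * Real.sqrt R := aux_cs f1 f2 if1f2abs iQ hR
  have hQle : Q ≤ L * (f1 ξ ^ 2 + 2 * J) := by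
    have hmono := setIntegral_mono_on iQ
      (integrableOn_const measure_Ioc_lt_top.ne) measurableSet_Ioc
      (fun x hx => hC x (Ioc_subset_Icc_self hx))
    rwa [setIntegral_const, Real.volume_real_Ioc_of_le hL.le, sub_zero,
      smul_eq_mul] at hmono
  have hQ2 : Q ≤ 4 * SB / L + 2 * L * (Real.sqrt Q * Real.sqrt R) := by
    have hstep : f1 ξ ^ 2 + 2 * J ≤ 4 * SB / L ^ 2 + 2 * (Real.sqrt Q * Real.sqrt R) :=
      add_le_add hξ2 (by linarith)
    calc Q ≤ L * (4 * SB / L ^ 2 + 2 * (Real.sqrt Q * Real.sqrt R)) :=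
          hQle.trans (mul_le_mul_of_nonneg_left hstep hL.le)
      _ = 4 * SB / L + 2 * L * (Real.sqrt Q * Real.sqrt R) := by field_simp
  have key : Real.sqrt Q ≤ (8 * Real.sqrt P / L + 2 * L * Real.sqrt R) +
      Real.sqrt (4 * P / L ^ 2) := by
    apply aux_quad (Real.sqrt_nonneg Q) (by positivity) (by positivity)
    rw [Real.sq_sqrt hQ0]
    have hSBexp : 4 * SB / L = 4 * P / L ^ 2 + 8 * Real.sqrt P * Real.sqrt Q / L := by
      rw [hSBdef]; field_simp; ring
    have hrw : 4 * P / L ^ 2 + (8 * Real.sqrt P / L + 2 * L * Real.sqrt R) * Real.sqrt Q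
        = 4 * P / L ^ 2 + 8 * Real.sqrt P * Real.sqrt Q / L
          + 2 * L * (Real.sqrt Q * Real.sqrt R) := by ring
    rw [hrw]
    linarith [hQ2, hSBexp]
  have hsQ4 : Real.sqrt (4 * P / L ^ 2) = 2 * Real.sqrt P / L := by
    rw [show 4 * P / L ^ 2 = (2 * Real.sqrt P / L) ^ 2 by
        rw [div_pow, mul_pow, Real.sq_sqrt hP0]; norm_num,
      Real.sqrt_sq (by positivity)]
  have hsQ : Real.sqrt Q ≤ 10 * Real.sqrt P / L + 2 * L * Real.sqrt R := by
    rw [hsQ4] at key; have h2L : 2 * Real.sqrt P / L + 8 * Real.sqrt P / L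
      = 10 * Real.sqrt P / L := by ring
    linarith
  have hE : ∫ x in Ioc (0:ℝ) L, f x ^ 4 ≤ SB * P := by
    have hb : ∀ x ∈ Ioc (0:ℝ) L, f x ^ 4 ≤ SB * f x ^ 2 := by
      intro x hx
      have h1 := hSB x (Ioc_subset_Icc_self hx)
      nlinarith [sq_nonneg (f x)]
    have hmono := setIntegral_mono_on i4 (iP.const_mul SB) measurableSet_Ioc hb
    rwa [integral_const_mul] at hmono
  have hSBb : SB ≤ 21 * P / L + 4 * L * Real.sqrt P * Real.sqrt R := by
    have h := mul_le_mul_of_nonneg_left hsQ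
      (by positivity : (0:ℝ) ≤ 2 * Real.sqrt P)
    have hs2 : Real.sqrt P * Real.sqrt P = P := Real.mul_self_sqrt hP0
    have hPP : 2 * Real.sqrt P * (10 * Real.sqrt P / L + 2 * L * Real.sqrt R)
        = 20 * P / L + 4 * L * Real.sqrt P * Real.sqrt R := by
      linear_combination (20 / L) * hs2
    have h2 : 2 * Real.sqrt P * Real.sqrt Q ≤ 20 * P / L + 4 * L * Real.sqrt P * Real.sqrt R :=
      hPP ▸ h
    have e1 : 20 * P / L = 20 * (P / L) := by ring
    have e2 : 21 * P / L = 21 * (P / L) := by ring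
    rw [hSBdef]
    linarith [h2, e1, e2]
  calc ∫ x in Ioc (0:ℝ) L, f x ^ 4 ≤ SB * P := hE
    _ ≤ (21 * P / L + 4 * L * Real.sqrt P * Real.sqrt R) * P :=
        mul_le_mul_of_nonneg_right hSBb hP0
    _ = 21 * P ^ 2 / L + 4 * L * P * Real.sqrt P * Real.sqrt R := by ring

set_option maxHeartbeats 1000000 in
/-- with `‖v‖_X = sup_{t∈[0,T]} ‖v(t,·)‖_{L²(0,L)} + ‖v_{xx}‖_{L²(Q_T)}`,
there is `C = C(L)` such that `‖v²‖_{L²(Q_T)} ≤ C (T^{1/2} + T^{1/4}) ‖v‖²_X`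
for every `v ∈ X(Q_T)` (here realised by functions that are continuous in `(t,x)` and
twice differentiable in `x`, with `v_x = vx`, `v_{xx} = vxx`). -/
theorem stmt7 (L : ℝ) (hL : 0 < L) :
    ∃ C : ℝ, 0 < C ∧ ∀ T : ℝ, 0 < T → ∀ v vx vxx : ℝ → ℝ → ℝ,
      Continuous (fun q : ℝ × ℝ => v q.1 q.2) →
      (∀ t ∈ Icc (0:ℝ) T, ∀ x ∈ Icc (0:ℝ) L, HasDerivAt (v t) (vx t x) x) →
      (∀ t ∈ Icc (0:ℝ) T, ∀ x ∈ Icc (0:ℝ) L, HasDerivAt (vx t) (vxx t x) x) →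
      (∀ t ∈ Icc (0:ℝ) T, IntegrableOn (fun x => (vxx t x) ^ 2) (Ioc 0 L)) →
      IntegrableOn (fun q : ℝ × ℝ => (vxx q.1 q.2) ^ 2) (Ioc 0 T ×ˢ Ioc 0 L) →
      (∫ t in Ioc (0:ℝ) T, ∫ x in Ioc (0:ℝ) L, (v t x) ^ 4) ^ ((1:ℝ)/2)
        ≤ C * (T ^ ((1:ℝ)/2) + T ^ ((1:ℝ)/4)) *
          ((⨆ t : Icc (0:ℝ) T, (∫ x in Ioc (0:ℝ) L, (v (t:ℝ) x) ^ 2) ^ ((1:ℝ)/2)) +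
            (∫ t in Ioc (0:ℝ) T, ∫ x in Ioc (0:ℝ) L, (vxx t x) ^ 2) ^ ((1:ℝ)/2)) ^ 2 := by
  have hC1 : 0 < Real.sqrt (21 / L) := Real.sqrt_pos.2 (by positivity)
  refine ⟨Real.sqrt (21 / L) + 2 * Real.sqrt L, by positivity, ?_⟩
  intro T hT v vx vxx hv hd1 hd2 hRsl hprod
  have hT4 : T ^ ((1:ℝ)/4) = Real.sqrt (Real.sqrt T) := by
    rw [show ((1:ℝ)/4) = (1/2) * (1/2) by norm_num, Real.rpow_mul hT.le,
      ← Real.sqrt_eq_rpow, ← Real.sqrt_eq_rpow]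
  simp only [← Real.sqrt_eq_rpow, hT4]
  haveI hne : Nonempty (Icc (0:ℝ) T) := ⟨⟨0, le_refl 0, hT.le⟩⟩
  set H := ∫ t in Ioc (0:ℝ) T, ∫ x in Ioc (0:ℝ) L, (vxx t x) ^ 2 with hHdef
  set A := ⨆ t : Icc (0:ℝ) T, Real.sqrt (∫ x in Ioc (0:ℝ) L, (v (t:ℝ) x) ^ 2) with hAdef
  -- basic facts
  have hcont_t : ∀ t : ℝ, Continuous (fun x => v t x) := fun t =>
    hv.comp (continuous_const.prodMk continuous_id)
  have hP0 : ∀ t : ℝ, 0 ≤ ∫ x in Ioc (0:ℝ) L, (v t x) ^ 2 := fun t =>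
    setIntegral_nonneg measurableSet_Ioc fun x _ => sq_nonneg _
  have hR0 : ∀ t : ℝ, 0 ≤ ∫ x in Ioc (0:ℝ) L, (vxx t x) ^ 2 := fun t =>
    setIntegral_nonneg measurableSet_Ioc fun x _ => sq_nonneg _
  have hH0 : 0 ≤ H := setIntegral_nonneg measurableSet_Ioc fun t _ => hR0 t
  -- boundedness of the sup family
  obtain ⟨K, hK⟩ := (isCompact_Icc.prod isCompact_Icc).exists_bound_of_continuousOn
    (s := Icc (0:ℝ) T ×ˢ Icc (0:ℝ) L) hv.continuousOn
  have hPle : ∀ t ∈ Icc (0:ℝ) T, (∫ x in Ioc (0:ℝ) L, (v t x) ^ 2) ≤ K ^ 2 * L := by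
    intro t ht
    have hb : ∀ x ∈ Ioc (0:ℝ) L, (v t x) ^ 2 ≤ K ^ 2 := by
      intro x hx
      have hvK : ‖v t x‖ ≤ K := hK (t, x) ⟨ht, Ioc_subset_Icc_self hx⟩
      rw [Real.norm_eq_abs] at hvK
      nlinarith [sq_abs (v t x), abs_nonneg (v t x)]
    have hmono : (∫ x in Ioc (0:ℝ) L, (v t x) ^ 2) ≤ ∫ _x in Ioc (0:ℝ) L, K ^ 2 :=
      setIntegral_mono_on ((hcont_t t).pow 2).integrableOn_Ioc
        (integrableOn_const measure_Ioc_lt_top.ne) measurableSet_Ioc hb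
    rwa [setIntegral_const, Real.volume_real_Ioc_of_le hL.le, sub_zero,
      smul_eq_mul, mul_comm] at hmono
  have hbdd : BddAbove (range fun t : Icc (0:ℝ) T =>
      Real.sqrt (∫ x in Ioc (0:ℝ) L, (v (t:ℝ) x) ^ 2)) := by
    refine ⟨Real.sqrt (K ^ 2 * L), ?_⟩
    rintro y ⟨t, rfl⟩
    exact Real.sqrt_le_sqrt (hPle t t.2)
  have hsPA : ∀ t ∈ Icc (0:ℝ) T,
      Real.sqrt (∫ x in Ioc (0:ℝ) L, (v t x) ^ 2) ≤ A := fun t ht =>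
    le_ciSup hbdd (⟨t, ht⟩ : Icc (0:ℝ) T)
  have hA0 : 0 ≤ A :=
    le_trans (Real.sqrt_nonneg _) (hsPA 0 ⟨le_refl 0, hT.le⟩)
  have hPA : ∀ t ∈ Icc (0:ℝ) T, (∫ x in Ioc (0:ℝ) L, (v t x) ^ 2) ≤ A ^ 2 := by
    intro t ht
    nlinarith [hsPA t ht, Real.sq_sqrt (hP0 t), Real.sqrt_nonneg (∫ x in Ioc (0:ℝ) L, (v t x) ^ 2)]
  -- integrability of t ↦ R t
  have hRint : IntegrableOn (fun t => ∫ x in Ioc (0:ℝ) L, (vxx t x) ^ 2) (Ioc (0:ℝ) T) := by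
    have h1 := hprod
    rw [IntegrableOn, Measure.volume_eq_prod, ← Measure.prod_restrict] at h1
    exact h1.integral_prod_left
  -- slice estimate
  have hslice : ∀ t ∈ Ioc (0:ℝ) T, (∫ x in Ioc (0:ℝ) L, (v t x) ^ 4) ≤
      21 * A ^ 4 / L + 4 * L * A ^ 3 * Real.sqrt (∫ x in Ioc (0:ℝ) L, (vxx t x) ^ 2) := by
    intro t ht
    have htI : t ∈ Icc (0:ℝ) T := Ioc_subset_Icc_self ht
    have hms : AEStronglyMeasurable (vxx t) (volume.restrict (Ioc (0:ℝ) L)) := by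
      refine ((measurable_deriv (vx t)).aestronglyMeasurable.restrict).congr ?_
      rw [Filter.EventuallyEq, ae_restrict_iff' measurableSet_Ioc]
      exact ae_of_all _ fun x hx => ((hd2 t htI x (Ioc_subset_Icc_self hx)).deriv).symm ▸ rfl
    have h := slice7 hL (v t) (vx t) (vxx t) (hcont_t t) (hd1 t htI) (hd2 t htI) hms
      (hRsl t htI)
    refine h.trans ?_
    set P := ∫ x in Ioc (0:ℝ) L, (v t x) ^ 2 with hPdef
    set R := ∫ x in Ioc (0:ℝ) L, (vxx t x) ^ 2 with hRdef
    have e1 : P ^ 2 ≤ A ^ 4 := by nlinarith [hPA t htI, hP0 t, sq_nonneg A]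
    have e2 : P * Real.sqrt P ≤ A ^ 3 := by
      nlinarith [hPA t htI, hsPA t htI, hP0 t, Real.sqrt_nonneg P, hA0,
        mul_le_mul (hPA t htI) (hsPA t htI) (Real.sqrt_nonneg P) (sq_nonneg A)]
    have t1 : 21 * P ^ 2 / L ≤ 21 * A ^ 4 / L := by gcongr
    have t2 : 4 * L * P * Real.sqrt P * Real.sqrt R ≤ 4 * L * A ^ 3 * Real.sqrt R := by
      have h3 : 4 * L * P * Real.sqrt P ≤ 4 * L * A ^ 3 := by
        have := mul_le_mul_of_nonneg_left e2 (show (0:ℝ) ≤ 4 * L by positivity)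
        linarith [this]
      exact mul_le_mul_of_nonneg_right h3 (Real.sqrt_nonneg _)
    linarith [t1, t2]
  -- integrability of sqrt R
  have hsR_int : IntegrableOn
      (fun t => Real.sqrt (∫ x in Ioc (0:ℝ) L, (vxx t x) ^ 2)) (Ioc (0:ℝ) T) := by
    refine Integrable.mono'
      (g := fun t => (1 + ∫ x in Ioc (0:ℝ) L, (vxx t x) ^ 2) / 2)
      (((integrableOn_const measure_Ioc_lt_top.ne).add hRint).div_const 2)
      (Real.continuous_sqrt.comp_aestronglyMeasurable hRint.aestronglyMeasurable)
      (ae_of_all _ fun t => ?_)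
    rw [Real.norm_eq_abs, abs_of_nonneg (Real.sqrt_nonneg _)]
    nlinarith [Real.sq_sqrt (hR0 t), sq_nonneg (Real.sqrt (∫ x in Ioc (0:ℝ) L, (vxx t x) ^ 2) - 1)]
  -- time integration
  have hI4 : (∫ t in Ioc (0:ℝ) T, ∫ x in Ioc (0:ℝ) L, (v t x) ^ 4) ≤
      21 * A ^ 4 / L * T + 4 * L * A ^ 3 *
        (∫ t in Ioc (0:ℝ) T, Real.sqrt (∫ x in Ioc (0:ℝ) L, (vxx t x) ^ 2)) := by
    have hmaj : IntegrableOn (fun t => 21 * A ^ 4 / L +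
        4 * L * A ^ 3 * Real.sqrt (∫ x in Ioc (0:ℝ) L, (vxx t x) ^ 2)) (Ioc (0:ℝ) T) :=
      (integrableOn_const measure_Ioc_lt_top.ne).add (hsR_int.const_mul _)
    have h := integral_mono_of_nonneg (μ := volume.restrict (Ioc (0:ℝ) T))
      (f := fun t => ∫ x in Ioc (0:ℝ) L, (v t x) ^ 4)
      (ae_of_all _ fun t => setIntegral_nonneg measurableSet_Ioc fun x _ => by positivity)
      hmaj ((ae_restrict_iff' measurableSet_Ioc).2 (ae_of_all _ fun t ht => hslice t ht))
    refine h.trans ?_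
    rw [integral_add (show Integrable (fun _ : ℝ => 21 * A ^ 4 / L) (volume.restrict (Ioc (0:ℝ) T)) from
      integrableOn_const measure_Ioc_lt_top.ne) (hsR_int.const_mul _),
      setIntegral_const, Real.volume_real_Ioc_of_le hT.le, sub_zero,
      smul_eq_mul, integral_const_mul]
    linarith
  -- Cauchy-Schwarz in time
  have hCS : (∫ t in Ioc (0:ℝ) T, Real.sqrt (∫ x in Ioc (0:ℝ) L, (vxx t x) ^ 2)) ≤
      Real.sqrt T * Real.sqrt H := by
    have e0 : (fun t : ℝ => |(1:ℝ) * Real.sqrt (∫ x in Ioc (0:ℝ) L, (vxx t x) ^ 2)|) =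
        fun t => Real.sqrt (∫ x in Ioc (0:ℝ) L, (vxx t x) ^ 2) := by
      funext t; rw [one_mul, abs_of_nonneg (Real.sqrt_nonneg _)]
    have e3 : (fun t : ℝ => (Real.sqrt (∫ x in Ioc (0:ℝ) L, (vxx t x) ^ 2)) ^ 2) =
        fun t => ∫ x in Ioc (0:ℝ) L, (vxx t x) ^ 2 := by
      funext t; exact Real.sq_sqrt (hR0 t)
    have h := aux_cs (μ := volume.restrict (Ioc (0:ℝ) T)) (fun _ => (1:ℝ))
      (fun t => Real.sqrt (∫ x in Ioc (0:ℝ) L, (vxx t x) ^ 2))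
      (by rw [show (fun t : ℝ => |(fun _ : ℝ => (1:ℝ)) t *
          (fun t => Real.sqrt (∫ x in Ioc (0:ℝ) L, (vxx t x) ^ 2)) t|) = fun t =>
          Real.sqrt (∫ x in Ioc (0:ℝ) L, (vxx t x) ^ 2) from e0]; exact hsR_int)
      (by simpa using (integrableOn_const measure_Ioc_lt_top.ne :
        IntegrableOn (fun _ : ℝ => (1:ℝ)) (Ioc (0:ℝ) T)))
      (by rw [show (fun t : ℝ => ((fun t => Real.sqrt (∫ x in Ioc (0:ℝ) L, (vxx t x) ^ 2)) t) ^ 2)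
          = fun t => ∫ x in Ioc (0:ℝ) L, (vxx t x) ^ 2 from e3]; exact hRint)
    rw [show (∫ t in Ioc (0:ℝ) T, |(fun _ : ℝ => (1:ℝ)) t *
        (fun t => Real.sqrt (∫ x in Ioc (0:ℝ) L, (vxx t x) ^ 2)) t|) =
        ∫ t in Ioc (0:ℝ) T, Real.sqrt (∫ x in Ioc (0:ℝ) L, (vxx t x) ^ 2) from by rw [e0]] at h
    rw [show (∫ t in Ioc (0:ℝ) T, ((fun _ : ℝ => (1:ℝ)) t) ^ 2) = T from by
      simp [Real.volume_Ioc, ENNReal.toReal_ofReal hT.le, hT.le]] at h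
    rw [show (∫ t in Ioc (0:ℝ) T,
        ((fun t => Real.sqrt (∫ x in Ioc (0:ℝ) L, (vxx t x) ^ 2)) t) ^ 2) = H from by
      rw [e3]] at h
    exact h
  -- combine
  have final4 : (∫ t in Ioc (0:ℝ) T, ∫ x in Ioc (0:ℝ) L, (v t x) ^ 4) ≤
      21 * A ^ 4 / L * T + 4 * L * A ^ 3 * (Real.sqrt T * Real.sqrt H) := by
    refine hI4.trans ?_
    have := mul_le_mul_of_nonneg_left hCS (show (0:ℝ) ≤ 4 * L * A ^ 3 by positivity)
    linarith
  have sqrt_add : ∀ a b : ℝ, 0 ≤ a → 0 ≤ b →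
      Real.sqrt (a + b) ≤ Real.sqrt a + Real.sqrt b := by
    intro a b ha hb
    have h := Real.sqrt_le_sqrt (show a + b ≤ (Real.sqrt a + Real.sqrt b) ^ 2 by
      nlinarith [Real.sq_sqrt ha, Real.sq_sqrt hb,
        mul_nonneg (Real.sqrt_nonneg a) (Real.sqrt_nonneg b)])
    rwa [Real.sqrt_sq (by positivity)] at h
  have s2 : Real.sqrt (21 * A ^ 4 / L * T) = Real.sqrt (21 / L) * A ^ 2 * Real.sqrt T := by
    rw [show 21 * A ^ 4 / L * T = (Real.sqrt (21 / L) * A ^ 2 * Real.sqrt T) ^ 2 by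
      rw [mul_pow, mul_pow, Real.sq_sqrt (show (0:ℝ) ≤ 21 / L by positivity),
        Real.sq_sqrt hT.le]; ring, Real.sqrt_sq (by positivity)]
  have s3 : Real.sqrt (4 * L * A ^ 3 * (Real.sqrt T * Real.sqrt H)) =
      2 * Real.sqrt L * Real.sqrt (A ^ 3 * Real.sqrt H) * Real.sqrt (Real.sqrt T) := by
    rw [show 4 * L * A ^ 3 * (Real.sqrt T * Real.sqrt H) =
      (2 * Real.sqrt L * Real.sqrt (A ^ 3 * Real.sqrt H) * Real.sqrt (Real.sqrt T)) ^ 2 by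
      rw [mul_pow, mul_pow, mul_pow, Real.sq_sqrt hL.le,
        Real.sq_sqrt (by positivity : (0:ℝ) ≤ A ^ 3 * Real.sqrt H),
        Real.sq_sqrt (Real.sqrt_nonneg T)]; ring, Real.sqrt_sq (by positivity)]
  have s4 : Real.sqrt (A ^ 3 * Real.sqrt H) ≤ (A + Real.sqrt H) ^ 2 := by
    have hB0 : 0 ≤ Real.sqrt H := Real.sqrt_nonneg H
    have h1 : A ^ 3 * Real.sqrt H ≤ ((A + Real.sqrt H) ^ 2) ^ 2 := by
      nlinarith [pow_nonneg hA0 4, mul_nonneg (pow_nonneg hA0 3) hB0,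
        mul_nonneg (mul_nonneg hA0 hA0) (mul_nonneg hB0 hB0),
        mul_nonneg hA0 (mul_nonneg hB0 (mul_nonneg hB0 hB0)),
        mul_nonneg hB0 (mul_nonneg hB0 (mul_nonneg hB0 hB0))]
    calc Real.sqrt (A ^ 3 * Real.sqrt H) ≤ Real.sqrt (((A + Real.sqrt H) ^ 2) ^ 2) :=
          Real.sqrt_le_sqrt h1
      _ = (A + Real.sqrt H) ^ 2 := Real.sqrt_sq (sq_nonneg _)
  have hB0 : 0 ≤ Real.sqrt H := Real.sqrt_nonneg H
  calc Real.sqrt (∫ t in Ioc (0:ℝ) T, ∫ x in Ioc (0:ℝ) L, (v t x) ^ 4)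
      ≤ Real.sqrt (21 * A ^ 4 / L * T + 4 * L * A ^ 3 * (Real.sqrt T * Real.sqrt H)) :=
        Real.sqrt_le_sqrt final4
    _ ≤ Real.sqrt (21 * A ^ 4 / L * T) +
        Real.sqrt (4 * L * A ^ 3 * (Real.sqrt T * Real.sqrt H)) :=
        sqrt_add _ _ (by positivity) (by positivity)
    _ = Real.sqrt (21 / L) * A ^ 2 * Real.sqrt T +
        2 * Real.sqrt L * Real.sqrt (A ^ 3 * Real.sqrt H) * Real.sqrt (Real.sqrt T) := by
        rw [s2, s3]
    _ ≤ Real.sqrt (21 / L) * (A + Real.sqrt H) ^ 2 * Real.sqrt T +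
        2 * Real.sqrt L * (A + Real.sqrt H) ^ 2 * Real.sqrt (Real.sqrt T) := by
        have u1 : A ^ 2 ≤ (A + Real.sqrt H) ^ 2 := by nlinarith [hA0, hB0]
        exact add_le_add
          (mul_le_mul_of_nonneg_right
            (mul_le_mul_of_nonneg_left u1 (Real.sqrt_nonneg _)) (Real.sqrt_nonneg T))
          (mul_le_mul_of_nonneg_right
            (mul_le_mul_of_nonneg_left s4 (by positivity)) (Real.sqrt_nonneg _))
    _ ≤ (Real.sqrt (21 / L) + 2 * Real.sqrt L) * (Real.sqrt T + Real.sqrt (Real.sqrt T)) *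
        (A + Real.sqrt H) ^ 2 := by
        nlinarith [mul_nonneg (mul_nonneg (Real.sqrt_nonneg (21/L))
            (Real.sqrt_nonneg (Real.sqrt T))) (sq_nonneg (A + Real.sqrt H)),
          mul_nonneg (mul_nonneg (Real.sqrt_nonneg L) (Real.sqrt_nonneg T))
            (sq_nonneg (A + Real.sqrt H))]
end
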